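/- Fix an integer g ≥ 1 and let (Q_1,…,Q_{g+1},W_1,…,W_{g+1}) ∈ ℝ^{2(g+1)} satisfy Σ_{i=1}^{g+1} Q_i < Σ_{i=1}^{g+1} W_i, and let (Q'_i, W'_i) be its image under the UD-pToda map. Then Σ_{i=1}^{g+1} Q'_i = Σ_{i=1}^{g+1} Q_i and Σ_{i=1}^{g+1} W'_i = Σ_{i=1}^{g+1} W_i. In particular Σ Q'_i < Σ W'_i, and the quantities C_0 = min(Σ Q_i, Σ W_i) and C_{−1} = Σ_{i=1}^{g+1} (Q_i + W_i) are preserved by the map. -/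

import Mathlib

open Fin.NatCast in
/-- `X_i = min_{k=0,…,g} Σ_{l=1}^{k} (W_{i−l} − Q_{i−l})` of the ultra-discrete
periodic Toda lattice (indices cyclic mod `g+1`; the `k = 0` term is `0`). -/
noncomputable def udX (g : ℕ) (Q W : Fin (g + 1) → ℝ) (i : Fin (g + 1)) : ℝ :=
  (Finset.range (g + 1)).inf' (Finset.nonempty_range_iff.mpr g.succ_ne_zero)
    fun k => ∑ l ∈ Finset.Icc 1 k,
      (W (i - (l : Fin (g + 1))) - Q (i - (l : Fin (g + 1))))

private lemma ud_inf'_set_congr {α β : Type*} [SemilatticeInf β] {s t : Finset α}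
    (hst : s = t) (hs : s.Nonempty) (f : α → β) :
    s.inf' hs f = t.inf' (hst ▸ hs) f := by subst hst; rfl

open Fin.NatCast in
private lemma ud_sum_shift (g : ℕ) (F : Fin (g + 1) → ℝ) (i : Fin (g + 1)) :
    ∑ l ∈ Finset.range (g + 1), F (i - (l : Fin (g + 1))) = ∑ j, F j := by
  rw [← Fin.sum_univ_eq_sum_range (fun l => F (i - (l : Fin (g + 1))))]
  simp only [Fin.cast_val_eq_self]
  exact Fintype.sum_equiv (Equiv.subLeft i) _ _ (fun j => rfl)

open Fin.NatCast Fin.CommRing in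
private lemma ud_P_shift (g : ℕ) (Q W : Fin (g + 1) → ℝ) (i : Fin (g + 1)) (k : ℕ) :
    (∑ l ∈ Finset.Icc 1 (k + 1),
        (W (i + 1 - (l : Fin (g + 1))) - Q (i + 1 - (l : Fin (g + 1)))))
    = (W i - Q i) + ∑ l ∈ Finset.Icc 1 k,
        (W (i - (l : Fin (g + 1))) - Q (i - (l : Fin (g + 1)))) := by
  rw [← Finset.Ico_add_one_right_eq_Icc, ← Finset.Ico_add_one_right_eq_Icc, Finset.sum_Ico_eq_sum_range,
    Finset.sum_Ico_eq_sum_range]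
  simp only [Nat.add_sub_cancel]
  rw [Finset.sum_range_succ']
  have h0 : i + 1 - ((1 + 0 : ℕ) : Fin (g + 1)) = i := by push_cast; ring
  rw [h0, add_comm]
  congr 1
  refine Finset.sum_congr rfl fun j _ => ?_
  have hij : i + 1 - ((1 + (j + 1) : ℕ) : Fin (g + 1)) = i - ((1 + j : ℕ) : Fin (g + 1)) := by
    push_cast; ring
  rw [hij]

open Fin.NatCast in
private lemma udX_rec (g : ℕ) (hg : 1 ≤ g) (Q W : Fin (g + 1) → ℝ)
    (h : (∑ i, Q i) < ∑ i, W i) (i : Fin (g + 1)) :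
    udX g Q W (i + 1) = min 0 ((W i - Q i) + udX g Q W i) := by
  have hne : (Finset.range g).Nonempty := Finset.nonempty_range_iff.mpr (by omega)
  set P : Fin (g + 1) → ℕ → ℝ := fun j k => ∑ l ∈ Finset.Icc 1 k,
      (W (j - (l : Fin (g + 1))) - Q (j - (l : Fin (g + 1)))) with hP
  set Y : ℝ := (Finset.range g).inf' hne (P i) with hY
  have hS : (0 : ℝ) < ∑ j, (W j - Q j) := by
    rw [Finset.sum_sub_distrib]; linarith
  have hP0 : ∀ j : Fin (g + 1), P j 0 = 0 := fun j => by simp [hP]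
  -- value of the long partial sum
  have hPg : P i g = (∑ j, (W j - Q j)) - (W i - Q i) := by
    have h1 : ∑ l ∈ Finset.range (g + 1),
        (W (i - (l : Fin (g + 1))) - Q (i - (l : Fin (g + 1)))) = ∑ j, (W j - Q j) :=
      ud_sum_shift g (fun j => W j - Q j) i
    have hins : Finset.range (g + 1) = insert 0 (Finset.Icc 1 g) := by
      ext x
      simp only [Finset.mem_range, Finset.mem_insert, Finset.mem_Icc]
      omega
    rw [hins, Finset.sum_insert (by simp)] at h1
    simp only [Nat.cast_zero, sub_zero] at h1
    have : W i - Q i + P i g = ∑ j, (W j - Q j) := h1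
    linarith
  -- X i = min Y (P i g)
  have hXi : udX g Q W i = min Y (P i g) := by
    show (Finset.range (g + 1)).inf' _ (P i) = _
    rw [ud_inf'_set_congr (Finset.range_add_one) _ (P i), Finset.inf'_insert, min_comm]
  -- X (i+1) = min 0 ((W i - Q i) + Y)
  have hXi1 : udX g Q W (i + 1) = min 0 ((W i - Q i) + Y) := by
    show (Finset.range (g + 1)).inf' _ (P (i + 1)) = _
    rw [ud_inf'_set_congr (Finset.range_add_one' g) _ (P (i + 1)), Finset.inf'_insert,
      Finset.inf'_map, hP0]
    rotate_left
    all_goals try exact Finset.map_nonempty.mpr hne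
    congr 1
    have hRHS : W i - Q i + Y = (Finset.range g).inf' hne (fun k => W i - Q i + P i k) := by
      rw [hY]
      exact Finset.apply_inf'_eq_inf'_comp hne (f := P i) (fun x => W i - Q i + x)
        (fun x y => by exact (min_add_add_left (W i - Q i) x y).symm)
    rw [hRHS]
    refine Finset.inf'_congr hne rfl fun k _ => ?_
    simp only [Function.comp_apply, Function.Embedding.coeFn_mk]
    exact ud_P_shift g Q W i k
  rw [hXi1, hXi, hPg]
  rcases le_total Y ((∑ j, (W j - Q j)) - (W i - Q i)) with h' | h'
  · rw [min_eq_left h']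
  · rw [min_eq_right h', min_eq_left (by linarith), min_eq_left (by linarith)]

/-- The UD-pToda map `Q'_i = min(W_i, Q_i − X_i)`, `W'_i = Q_{i+1} + W_i − Q'_i`
preserves `Σ Q_i` and `Σ W_i`; in particular it preserves `Σ Q_i < Σ W_i`,
`C_0 = min(Σ Q_i, Σ W_i)` and `C_{−1} = Σ (Q_i + W_i)`. -/
theorem udpToda_preserves_sums (g : ℕ) (hg : 1 ≤ g) (Q W Q' W' : Fin (g + 1) → ℝ)
    (h : (∑ i, Q i) < ∑ i, W i)
    (hQ' : ∀ i : Fin (g + 1), Q' i = min (W i) (Q i - udX g Q W i))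
    (hW' : ∀ i : Fin (g + 1), W' i = Q (i + 1) + W i - Q' i) :
    (∑ i, Q' i) = (∑ i, Q i) ∧ (∑ i, W' i) = (∑ i, W i) ∧
    (∑ i, Q' i) < (∑ i, W' i) ∧
    min (∑ i, Q' i) (∑ i, W' i) = min (∑ i, Q i) (∑ i, W i) ∧
    (∑ i, (Q' i + W' i)) = ∑ i, (Q i + W i) := by
  have key : ∀ i : Fin (g + 1), Q' i = Q i + (udX g Q W (i + 1) - udX g Q W i) := by
    intro i
    rw [hQ' i, udX_rec g hg Q W h i]
    rcases le_total (W i) (Q i - udX g Q W i) with h' | h'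
    · rw [min_eq_left h', min_eq_right (by linarith)]; ring
    · rw [min_eq_right h', min_eq_left (by linarith)]; ring
  have tele : ∑ i : Fin (g + 1), udX g Q W (i + 1) = ∑ i, udX g Q W i :=
    Fintype.sum_equiv (Equiv.addRight (1 : Fin (g + 1))) _ _ (fun i => rfl)
  have hQshift : ∑ i : Fin (g + 1), Q (i + 1) = ∑ i, Q i :=
    Fintype.sum_equiv (Equiv.addRight (1 : Fin (g + 1))) _ _ (fun i => rfl)
  have hQs : ∑ i, Q' i = ∑ i, Q i := by
    simp only [key]
    rw [Finset.sum_add_distrib, Finset.sum_sub_distrib, tele]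
    ring
  have hWs : ∑ i, W' i = ∑ i, W i := by
    simp only [hW']
    rw [Finset.sum_sub_distrib, Finset.sum_add_distrib, hQshift, hQs]
    ring
  exact ⟨hQs, hWs, by rw [hQs, hWs]; exact h, by rw [hQs, hWs],
    by rw [Finset.sum_add_distrib, Finset.sum_add_distrib, hQs, hWs]⟩
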